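/- Let M1, M2 be binary matroids over ground sets E1, E2 such that E1 ∩ E2 is a cocircuit of cardinality 3 in both M1 and M2 and contains no circuit of M1 or M2, and let M = M1 Δ M2 be their Y-sum. If each of M1, M2 has a 3-cycle cover, then so does M. -/
import Mathlib


/-- A binary matroid, given by its ground set and its cycle space (a GF(2)-subspace,
presented as a family of subsets of the ground set containing `∅` and closed under
symmetric difference). -/
structure BinaryMatroid (α : Type*) [DecidableEq α] where
  E : Finset α
  cycles : Set (Finset α)
  subset_ground : ∀ C ∈ cycles, C ⊆ E
  empty_mem : ∅ ∈ cycles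
  symmDiff_mem : ∀ C ∈ cycles, ∀ D ∈ cycles, symmDiff C D ∈ cycles

variable {α : Type*} [DecidableEq α]

/-- A circuit: a minimal nonempty cycle. -/
def BinaryMatroid.IsCircuit (M : BinaryMatroid α) (C : Finset α) : Prop :=
  C ∈ M.cycles ∧ C.Nonempty ∧ ∀ C' ∈ M.cycles, C'.Nonempty → C' ⊆ C → C' = C

/-- A cocycle: a subset of the ground set in the orthogonal complement of the cycle space,
i.e. meeting every cycle in an even number of elements. -/
def BinaryMatroid.IsCocycle (M : BinaryMatroid α) (D : Finset α) : Prop :=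
  D ⊆ M.E ∧ ∀ C ∈ M.cycles, Even ((D ∩ C).card)

/-- A cocircuit: a minimal nonempty cocycle. -/
def BinaryMatroid.IsCocircuit (M : BinaryMatroid α) (D : Finset α) : Prop :=
  M.IsCocycle D ∧ D.Nonempty ∧ ∀ D', M.IsCocycle D' → D'.Nonempty → D' ⊆ D → D' = D

/-- `M = M1 Δ M2`: the binary matroid on `E1 Δ E2` whose cycles are the subsets of
`E1 Δ E2` of the form `C1 Δ C2` with `Ci` a cycle of `Mi`. -/
def DeltaSum (M M1 M2 : BinaryMatroid α) : Prop :=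
  M.E = symmDiff M1.E M2.E ∧
  M.cycles = {C | C ⊆ M.E ∧ ∃ C1 ∈ M1.cycles, ∃ C2 ∈ M2.cycles, C = symmDiff C1 C2}

set_option maxHeartbeats 1000000 in
lemma even3 {x y z : α} (hxy : x ≠ y) (hxz : x ≠ z) (hyz : y ≠ z) {s : Finset α}
    (hs : s ⊆ {x,y,z}) (he : Even s.card) :
    s = ∅ ∨ s = {y,z} ∨ s = {x,z} ∨ s = {x,y} := by
  have h3 : ({x,y,z} : Finset α).card = 3 := by
    rw [Finset.card_insert_of_notMem (by simp [hxy, hxz]),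
        Finset.card_insert_of_notMem (by simp [hyz])]
    simp
  have hle : s.card ≤ 3 := h3 ▸ Finset.card_le_card hs
  interval_cases h : s.card
  · left; exact Finset.card_eq_zero.mp h
  · simp [Nat.even_iff] at he
  · obtain ⟨a, b, hab, rfl⟩ := Finset.card_eq_two.mp h
    have ha := hs (by simp : a ∈ ({a,b} : Finset α))
    have hb := hs (by simp : b ∈ ({a,b} : Finset α))
    simp only [Finset.mem_insert, Finset.mem_singleton] at ha hb
    rcases ha with rfl|rfl|rfl <;> rcases hb with rfl|rfl|rfl <;>
      simp_all [Finset.pair_comm]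
  · simp [Nat.even_iff] at he

lemma core (M' : BinaryMatroid α) (T : Finset α) (x y z : α)
    (hxy : x ≠ y) (hxz : x ≠ z) (hyz : y ≠ z) (hT : T = {x,y,z})
    (heven : ∀ C ∈ M'.cycles, Even ((C ∩ T).card))
    (A B C : Finset α) (hA : A ∈ M'.cycles) (hB : B ∈ M'.cycles) (hC : C ∈ M'.cycles)
    (hU : A ∪ B ∪ C = M'.E) (ha : A ∩ T = {y,z}) (hb : B ∩ T = {x,z}) :
    ∃ A' B' C', A' ∈ M'.cycles ∧ B' ∈ M'.cycles ∧ C' ∈ M'.cycles ∧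
      A' ∪ B' ∪ C' = M'.E ∧ A' ∩ T = {y,z} ∧ B' ∩ T = {x,z} ∧ C' ∩ T = {x,y} := by
  have hsub : C ∩ T ⊆ {x,y,z} := hT ▸ Finset.inter_subset_right
  rcases even3 hxy hxz hyz hsub (heven C hC) with hc|hc|hc|hc
  · refine ⟨A, B, symmDiff (symmDiff C A) B, hA, hB,
      M'.symmDiff_mem _ (M'.symmDiff_mem _ hC _ hA) _ hB, ?_, ha, hb, ?_⟩
    · rw [← hU]; ext a; simp [Finset.mem_symmDiff, Finset.mem_union]; tauto
    · ext a
      have ha' := Finset.ext_iff.mp ha a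
      have hb' := Finset.ext_iff.mp hb a
      have hc' := Finset.ext_iff.mp hc a
      clear ha hb hc hU heven hA hB hC
      subst hT
      by_cases h1 : a = x <;> by_cases h2 : a = y <;> by_cases h3 : a = z <;>
        simp_all [Finset.mem_symmDiff]
  · refine ⟨A, B, symmDiff C B, hA, hB, M'.symmDiff_mem _ hC _ hB, ?_, ha, hb, ?_⟩
    · rw [← hU]; ext a; simp [Finset.mem_symmDiff, Finset.mem_union]; tauto
    · ext a
      have ha' := Finset.ext_iff.mp ha a
      have hb' := Finset.ext_iff.mp hb a
      have hc' := Finset.ext_iff.mp hc a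
      clear ha hb hc hU heven hA hB hC
      subst hT
      by_cases h1 : a = x <;> by_cases h2 : a = y <;> by_cases h3 : a = z <;>
        simp_all [Finset.mem_symmDiff]
  · refine ⟨A, B, symmDiff C A, hA, hB, M'.symmDiff_mem _ hC _ hA, ?_, ha, hb, ?_⟩
    · rw [← hU]; ext a; simp [Finset.mem_symmDiff, Finset.mem_union]; tauto
    · ext a
      have ha' := Finset.ext_iff.mp ha a
      have hb' := Finset.ext_iff.mp hb a
      have hc' := Finset.ext_iff.mp hc a
      clear ha hb hc hU heven hA hB hC
      subst hT
      by_cases h1 : a = x <;> by_cases h2 : a = y <;> by_cases h3 : a = z <;>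
        simp_all [Finset.mem_symmDiff]
  · exact ⟨A, B, C, hA, hB, hC, hU, ha, hb, hc⟩

set_option maxHeartbeats 1000000 in
lemma norm (M' : BinaryMatroid α) (T : Finset α) (x y z : α)
    (hxy : x ≠ y) (hxz : x ≠ z) (hyz : y ≠ z) (hT : T = {x,y,z}) (hTE : T ⊆ M'.E)
    (heven : ∀ C ∈ M'.cycles, Even ((C ∩ T).card))
    (h : ∃ A B C, A ∈ M'.cycles ∧ B ∈ M'.cycles ∧ C ∈ M'.cycles ∧ A ∪ B ∪ C = M'.E) :
    ∃ A B C, A ∈ M'.cycles ∧ B ∈ M'.cycles ∧ C ∈ M'.cycles ∧ A ∪ B ∪ C = M'.E ∧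
      A ∩ T = {y,z} ∧ B ∩ T = {x,z} ∧ C ∩ T = {x,y} := by
  obtain ⟨A, B, C, hA, hB, hC, hU⟩ := h
  have hT3 : T.card = 3 := by
    rw [hT, Finset.card_insert_of_notMem (by simp [hxy, hxz]),
        Finset.card_insert_of_notMem (by simp [hyz])]
    simp
  have hcover : (A ∩ T) ∪ (B ∩ T) ∪ (C ∩ T) = T := by
    rw [← Finset.union_inter_distrib_right, ← Finset.union_inter_distrib_right, hU]
    exact Finset.inter_eq_right.mpr hTE
  have hne : ∀ s : Finset α, s ⊆ T → Even s.card → T ⊆ s → False := by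
    intro s hsT hse hTs
    rw [subset_antisymm hsT hTs] at hse
    rw [hT3] at hse
    exact (Nat.not_even_iff.mpr rfl) (by simpa using hse)
  have key : ∃ U V W, U ∈ M'.cycles ∧ V ∈ M'.cycles ∧ W ∈ M'.cycles ∧
      U ∪ V ∪ W = M'.E ∧ U ∩ T ≠ V ∩ T ∧ U ∩ T ≠ ∅ ∧ V ∩ T ≠ ∅ := by
    by_cases hab : A ∩ T = B ∩ T
    · by_cases hac : A ∩ T = C ∩ T
      · exact absurd (hne (A ∩ T) Finset.inter_subset_right (heven A hA)
          (by rw [← hcover, ← hab, ← hac]; simp)) (fun h => h)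
      · by_cases ha0 : A ∩ T = ∅
        · exact absurd (hne (C ∩ T) Finset.inter_subset_right (heven C hC)
            (by rw [← hcover, ← hab, ha0]; simp)) (fun h => h)
        · by_cases hc0 : C ∩ T = ∅
          · exact absurd (hne (A ∩ T) Finset.inter_subset_right (heven A hA)
              (by rw [← hcover, ← hab, hc0]; simp)) (fun h => h)
          · exact ⟨A, C, B, hA, hC, hB, by rw [← hU]; ext a; simp [Finset.mem_union]; tauto,
              hac, ha0, hc0⟩
    · by_cases ha0 : A ∩ T = ∅
      · by_cases hbc : B ∩ T = C ∩ T
        · exact absurd (hne (B ∩ T) Finset.inter_subset_right (heven B hB)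
            (by rw [← hcover, ← hbc, ha0]; simp)) (fun h => h)
        · by_cases hc0 : C ∩ T = ∅
          · exact absurd (hne (B ∩ T) Finset.inter_subset_right (heven B hB)
              (by rw [← hcover, ha0, hc0]; simp)) (fun h => h)
          · exact ⟨B, C, A, hB, hC, hA, by rw [← hU]; ext a; simp [Finset.mem_union]; tauto,
              hbc, fun h => hab (ha0.trans h.symm), hc0⟩
      · by_cases hb0 : B ∩ T = ∅
        · by_cases hac : A ∩ T = C ∩ T
          · exact absurd (hne (A ∩ T) Finset.inter_subset_right (heven A hA)
              (by rw [← hcover, ← hac, hb0]; simp)) (fun h => h)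
          · by_cases hc0 : C ∩ T = ∅
            · exact absurd (hne (A ∩ T) Finset.inter_subset_right (heven A hA)
                (by rw [← hcover, hb0, hc0]; simp)) (fun h => h)
            · exact ⟨A, C, B, hA, hC, hB, by rw [← hU]; ext a; simp [Finset.mem_union]; tauto,
                hac, ha0, hc0⟩
        · exact ⟨A, B, C, hA, hB, hC, hU, hab, ha0, hb0⟩
  obtain ⟨U, V, W, hUc, hVc, hWc, hUn, huv, hu0, hv0⟩ := key
  have hsubU : U ∩ T ⊆ {x,y,z} := hT ▸ Finset.inter_subset_right
  have hsubV : V ∩ T ⊆ {x,y,z} := hT ▸ Finset.inter_subset_right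
  rcases even3 hxy hxz hyz hsubU (heven U hUc) with hu|hu|hu|hu
  · exact absurd hu hu0
  all_goals rcases even3 hxy hxz hyz hsubV (heven V hVc) with hv|hv|hv|hv
  -- u = {y,z}
  · exact absurd hv hv0
  · exact absurd (hu.trans hv.symm) huv
  · exact core M' T x y z hxy hxz hyz hT heven U V W hUc hVc hWc hUn hu hv
  · -- u = p, v = r : perm (x,z,y)
    obtain ⟨A', B', C', h1, h2, h3, h4, h5, h6, h7⟩ :=
      core M' T x z y hxz hxy (Ne.symm hyz) (by rw [hT]; ext a; simp; tauto) heven U V W hUc hVc hWc hUn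
        (by rw [hu, Finset.pair_comm]) hv
    exact ⟨A', C', B', h1, h3, h2,
      by rw [← h4]; ext a; simp [Finset.mem_union]; tauto,
      by rw [h5, Finset.pair_comm], h7, h6⟩
  -- u = {x,z}
  · exact absurd hv hv0
  · -- u = q, v = p : perm (y,x,z)
    obtain ⟨A', B', C', h1, h2, h3, h4, h5, h6, h7⟩ :=
      core M' T y x z (Ne.symm hxy) hyz hxz (by rw [hT]; ext a; simp; tauto) heven U V W hUc hVc hWc hUn
        hu hv
    exact ⟨B', A', C', h2, h1, h3,
      by rw [← h4]; ext a; simp [Finset.mem_union]; tauto,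
      h6, h5, by rw [h7, Finset.pair_comm]⟩
  · exact absurd (hu.trans hv.symm) huv
  · -- u = q, v = r : perm (y,z,x)
    obtain ⟨A', B', C', h1, h2, h3, h4, h5, h6, h7⟩ :=
      core M' T y z x hyz (Ne.symm hxy) (Ne.symm hxz) (by rw [hT]; ext a; simp; tauto) heven U V W hUc hVc hWc hUn
        (by rw [hu, Finset.pair_comm]) (by rw [hv, Finset.pair_comm])
    exact ⟨C', A', B', h3, h1, h2,
      by rw [← h4]; ext a; simp [Finset.mem_union]; tauto,
      h7, by rw [h5, Finset.pair_comm], by rw [h6, Finset.pair_comm]⟩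
  -- u = {x,y}
  · exact absurd hv hv0
  · -- u = r, v = p : perm (z,x,y)
    obtain ⟨A', B', C', h1, h2, h3, h4, h5, h6, h7⟩ :=
      core M' T z x y (Ne.symm hxz) (Ne.symm hyz) hxy (by rw [hT]; ext a; simp; tauto) heven U V W hUc hVc hWc hUn
        hu (by rw [hv, Finset.pair_comm])
    exact ⟨B', C', A', h2, h3, h1,
      by rw [← h4]; ext a; simp [Finset.mem_union]; tauto,
      by rw [h6, Finset.pair_comm], by rw [h7, Finset.pair_comm], h5⟩
  · -- u = r, v = q : perm (z,y,x)
    obtain ⟨A', B', C', h1, h2, h3, h4, h5, h6, h7⟩ :=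
      core M' T z y x (Ne.symm hyz) (Ne.symm hxz) (Ne.symm hxy) (by rw [hT]; ext a; simp; tauto) heven U V W hUc hVc hWc hUn
        (by rw [hu, Finset.pair_comm]) (by rw [hv, Finset.pair_comm])
    exact ⟨C', B', A', h3, h2, h1,
      by rw [← h4]; ext a; simp [Finset.mem_union]; tauto,
      by rw [h7, Finset.pair_comm], by rw [h6, Finset.pair_comm], by rw [h5, Finset.pair_comm]⟩
  · exact absurd (hu.trans hv.symm) huv

set_option maxHeartbeats 1000000 in
/-- If `M` is the Y-sum of `M1` and `M2` (their ground sets meeting in a common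
cocircuit of cardinality 3 containing no circuit of either) and each `Mi` has a 3-cycle cover,
then so does `M`. -/
theorem stmt_9 (M M1 M2 : BinaryMatroid α)
    (hco1 : M1.IsCocircuit (M1.E ∩ M2.E)) (hco2 : M2.IsCocircuit (M1.E ∩ M2.E))
    (hcard : (M1.E ∩ M2.E).card = 3)
    (hnc1 : ¬ ∃ C, M1.IsCircuit C ∧ C ⊆ M1.E ∩ M2.E)
    (hnc2 : ¬ ∃ C, M2.IsCircuit C ∧ C ⊆ M1.E ∩ M2.E)
    (hsum : DeltaSum M M1 M2)
    (h1 : ∃ A B C, A ∈ M1.cycles ∧ B ∈ M1.cycles ∧ C ∈ M1.cycles ∧ A ∪ B ∪ C = M1.E)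
    (h2 : ∃ A B C, A ∈ M2.cycles ∧ B ∈ M2.cycles ∧ C ∈ M2.cycles ∧ A ∪ B ∪ C = M2.E) :
    ∃ A B C, A ∈ M.cycles ∧ B ∈ M.cycles ∧ C ∈ M.cycles ∧ A ∪ B ∪ C = M.E := by

  obtain ⟨x, y, z, hxy, hxz, hyz, hTeq⟩ := Finset.card_eq_three.mp hcard
  have heven1 : ∀ C ∈ M1.cycles, Even ((C ∩ (M1.E ∩ M2.E)).card) := fun C hC => by
    rw [Finset.inter_comm]; exact hco1.1.2 C hC
  have heven2 : ∀ C ∈ M2.cycles, Even ((C ∩ (M1.E ∩ M2.E)).card) := fun C hC => by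
    rw [Finset.inter_comm]; exact hco2.1.2 C hC
  obtain ⟨A1, B1, C1, hA1, hB1, hC1, hU1, ta1, tb1, tc1⟩ :=
    norm M1 (M1.E ∩ M2.E) x y z hxy hxz hyz hTeq Finset.inter_subset_left heven1 h1
  obtain ⟨A2, B2, C2, hA2, hB2, hC2, hU2, ta2, tb2, tc2⟩ :=
    norm M2 (M1.E ∩ M2.E) x y z hxy hxz hyz hTeq Finset.inter_subset_right heven2 h2
  have hmem : ∀ P1 ∈ M1.cycles, ∀ P2 ∈ M2.cycles,
      P1 ∩ (M1.E ∩ M2.E) = P2 ∩ (M1.E ∩ M2.E) → symmDiff P1 P2 ∈ M.cycles := by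
    intro P1 hP1 P2 hP2 htr
    rw [hsum.2]
    refine ⟨?_, P1, hP1, P2, hP2, rfl⟩
    rw [hsum.1]
    intro a ha
    have m1 : a ∈ P1 → a ∈ M1.E := fun h => M1.subset_ground P1 hP1 h
    have m2 : a ∈ P2 → a ∈ M2.E := fun h => M2.subset_ground P2 hP2 h
    have htr' := Finset.ext_iff.mp htr a
    simp only [Finset.mem_inter] at htr'
    simp only [Finset.mem_symmDiff] at ha ⊢
    tauto
  refine ⟨symmDiff A1 A2, symmDiff B1 B2, symmDiff C1 C2,
    hmem A1 hA1 A2 hA2 (ta1.trans ta2.symm),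
    hmem B1 hB1 B2 hB2 (tb1.trans tb2.symm),
    hmem C1 hC1 C2 hC2 (tc1.trans tc2.symm), ?_⟩
  rw [hsum.1]
  ext a
  have e1 := Finset.ext_iff.mp hU1 a
  have e2 := Finset.ext_iff.mp hU2 a
  have ha1' := Finset.ext_iff.mp (ta1.trans ta2.symm) a
  have hb1' := Finset.ext_iff.mp (tb1.trans tb2.symm) a
  have hc1' := Finset.ext_iff.mp (tc1.trans tc2.symm) a
  have mA1 : a ∈ A1 → a ∈ M1.E := fun h => M1.subset_ground A1 hA1 h
  have mB1 : a ∈ B1 → a ∈ M1.E := fun h => M1.subset_ground B1 hB1 h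
  have mC1 : a ∈ C1 → a ∈ M1.E := fun h => M1.subset_ground C1 hC1 h
  have mA2 : a ∈ A2 → a ∈ M2.E := fun h => M2.subset_ground A2 hA2 h
  have mB2 : a ∈ B2 → a ∈ M2.E := fun h => M2.subset_ground B2 hB2 h
  have mC2 : a ∈ C2 → a ∈ M2.E := fun h => M2.subset_ground C2 hC2 h
  simp only [Finset.mem_inter, Finset.mem_union] at e1 e2 ha1' hb1' hc1'
  simp only [Finset.mem_union, Finset.mem_symmDiff]
  by_cases hE1 : a ∈ M1.E <;> by_cases hE2 : a ∈ M2.E <;> simp_all <;> tauto
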